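/- Let c > 0, t > 0, and y : [0,t] → ℝ be C² with sup|y'| < c. For x ∈ (-ct, y(t)), set h₊(τ) = -(1/2)(x - y(τ) + c(t-τ))² and let τ₊(x) be the retarded time with x = y(τ₊) - c(t-τ₊). Then h₊ attains its maximum value 0 on [0,t] uniquely at τ₊(x), with h₊'(τ₊(x)) = 0 and h₊''(τ₊(x)) = -(c + y'(τ₊(x)))² < 0. -/

import Mathlib

/-- the Laplace exponent `h₊(τ) = -(1/2)(x - y τ + c(t-τ))²` attains
its maximum `0` on `[0,t]` uniquely at the retarded time `τ₊`, with
`h₊'(τ₊) = 0` and `h₊''(τ₊) = -(c + y'(τ₊))² < 0`. -/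
theorem stmt_15 (c t x : ℝ) (hc : 0 < c) (ht : 0 < t)
    (y : ℝ → ℝ) (hy : ContDiff ℝ 2 y) (h0 : y 0 = 0)
    (vbar : ℝ) (hv : ∀ τ ∈ Set.Icc (0:ℝ) t, |deriv y τ| ≤ vbar) (hvc : vbar < c)
    (hx : x ∈ Set.Ioo (-(c*t)) (y t))
    (τp : ℝ) (hτp : τp ∈ Set.Icc (0:ℝ) t) (hτx : x = y τp - c*(t - τp))
    (h : ℝ → ℝ) (hh : ∀ τ, h τ = -(1/2) * (x - y τ + c*(t - τ))^2) :
    h τp = 0 ∧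
    (∀ s ∈ Set.Icc (0:ℝ) t, s ≠ τp → h s < 0) ∧
    HasDerivAt h 0 τp ∧
    deriv (deriv h) τp = -(c + deriv y τp)^2 ∧
    deriv (deriv h) τp < 0 := by
  have hy1 : Differentiable ℝ y := hy.differentiable (by norm_num)
  have hy2' : ContDiff ℝ (1+1 : ℕ∞) y := by exact_mod_cast hy
  have hdy : ContDiff ℝ 1 (deriv y) := (contDiff_succ_iff_deriv.mp hy2').2.2
  have hdy1 : Differentiable ℝ (deriv y) := hdy.differentiable (by norm_num)
  set g : ℝ → ℝ := fun τ => x - y τ + c * (t - τ) with hg_def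
  have hfun : h = fun τ => -(1/2) * (g τ)^2 := funext hh
  have hgτp : g τp = 0 := by simp only [hg_def]; linarith [hτx]
  have hg : ∀ τ, HasDerivAt g (-(deriv y τ) - c) τ := by
    intro τ
    have h1 : HasDerivAt (fun τ => x - y τ) (0 - deriv y τ) τ :=
      (hasDerivAt_const τ x).sub (hy1 τ).hasDerivAt
    have h2 : HasDerivAt (fun τ : ℝ => c * (t - τ)) (c * (0 - 1)) τ :=
      ((hasDerivAt_const τ t).sub (hasDerivAt_id τ)).const_mul c
    have := h1.add h2
    exact this.congr_deriv (by ring)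
  have hd : ∀ τ, HasDerivAt h (g τ * (deriv y τ + c)) τ := by
    intro τ
    rw [hfun]
    have := ((hg τ).pow 2).const_mul (-(1/2) : ℝ)
    exact this.congr_deriv (by ring)
  have hderivh : deriv h = fun τ => g τ * (deriv y τ + c) :=
    funext fun τ => (hd τ).deriv
  have hcy : c + deriv y τp > 0 := by
    have := hv τp hτp
    have := abs_le.mp this
    linarith
  -- second derivative
  have hd2 : HasDerivAt (deriv h)
      ((-(deriv y τp) - c) * (deriv y τp + c) + g τp * deriv (deriv y) τp) τp := by
    rw [hderivh]
    exact (hg τp).mul ((hdy1 τp).hasDerivAt.add_const c)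
  have hD2 : deriv (deriv h) τp = -(c + deriv y τp)^2 := by
    rw [hd2.deriv, hgτp]; ring
  refine ⟨by rw [hh, show x - y τp + c*(t - τp) = 0 by linarith]; ring, ?_, ?_, hD2, ?_⟩
  · -- uniqueness of maximum
    intro s hs hsne
    have hanti : StrictAntiOn g (Set.Icc 0 t) := by
      apply strictAntiOn_of_deriv_neg (convex_Icc 0 t)
      · exact Continuous.continuousOn (by
          have : Continuous g := by
            exact (continuous_const.sub hy1.continuous).add
              (continuous_const.mul (continuous_const.sub continuous_id))
          exact this)
      · intro z hz
        rw [interior_Icc] at hz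
        rw [(hg z).deriv]
        have := abs_le.mp (hv z ⟨le_of_lt hz.1, le_of_lt hz.2⟩)
        linarith
    have hgs : g s ≠ 0 := by
      rcases lt_or_gt_of_ne hsne with hlt | hgt
      · have := hanti hs hτp hlt; rw [hgτp] at this; exact ne_of_gt this
      · have := hanti hτp hs hgt; rw [hgτp] at this; exact ne_of_lt this
    rw [hh]
    have hpos : (0:ℝ) < (x - y s + c*(t - s))^2 :=
      lt_of_le_of_ne (sq_nonneg _) (Ne.symm (pow_ne_zero 2 hgs))
    linarith
  · have := hd τp; rw [hgτp] at this; simpa using this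
  · rw [hD2]; nlinarith [hcy]
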